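/- Let ϕ : (0,∞) → (0,∞) be a continuous function. If h_i, h : S^{n-1} → (0,∞) are continuous functions with h_i → h uniformly on S^{n-1}, then Ṽ_ϕ([h_i]) → Ṽ_ϕ([h]) as i → ∞, where [f] denotes the Wulff shape of f. -/

import Mathlib

open MeasureTheory Metric Set Filter
open scoped ENNReal NNReal Topology RealInnerProductSpace

noncomputable section

/-- The unit sphere `S^{n-1}` in `ℝⁿ`. -/
def unitSphere (n : ℕ) : Set (EuclideanSpace ℝ (Fin n)) :=
  Metric.sphere (0 : EuclideanSpace ℝ (Fin n)) 1

/-- The spherical Lebesgue (Hausdorff) measure on `S^{n-1}`, i.e. the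
`(n-1)`-dimensional Hausdorff measure restricted to the unit sphere. -/
def sphMeasure (n : ℕ) : Measure (EuclideanSpace ℝ (Fin n)) :=
  (μH[(n : ℝ) - 1] : Measure (EuclideanSpace ℝ (Fin n))).restrict (unitSphere n)

/-- `K` is a convex body in `ℝⁿ` with the origin in its interior
(`K ∈ 𝒦₀ⁿ`). -/
def IsConvexBody0 {n : ℕ} (K : Set (EuclideanSpace ℝ (Fin n))) : Prop :=
  IsCompact K ∧ Convex ℝ K ∧ (0 : EuclideanSpace ℝ (Fin n)) ∈ interior K

/-- The radial function `ρ_K(u) = max {r > 0 : r • u ∈ K}`. -/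
def radialFn {n : ℕ} (K : Set (EuclideanSpace ℝ (Fin n))) (u : EuclideanSpace ℝ (Fin n)) : ℝ :=
  sSup {r : ℝ | 0 < r ∧ r • u ∈ K}

/-- The support function `h_K(u) = max {x·u : x ∈ K}`. -/
def suppFn {n : ℕ} (K : Set (EuclideanSpace ℝ (Fin n))) (u : EuclideanSpace ℝ (Fin n)) : ℝ :=
  sSup ((fun x => ⟪x, u⟫) '' K)

/-- The reverse radial Gauss image `α*_K(η)`: unit vectors `x/‖x‖` over boundary
points `x ∈ ∂K` lying on a supporting hyperplane of `K` with outer normal in `η`. -/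
def revGauss {n : ℕ} (K η : Set (EuclideanSpace ℝ (Fin n))) :
    Set (EuclideanSpace ℝ (Fin n)) :=
  {v | ∃ x ∈ frontier K, (∃ u ∈ η, ⟪x, u⟫ = suppFn K u) ∧ v = ‖x‖⁻¹ • x}

/-- The dual Orlicz curvature `C̃_φ(K,η) = (1/n) ∫_{α*_K(η)} φ(ρ_K(u)) du`,
as a set function. -/
def dualCurv {n : ℕ} (φ : ℝ → ℝ) (K η : Set (EuclideanSpace ℝ (Fin n))) : ℝ :=
  (n : ℝ)⁻¹ * ∫ u in revGauss K η, φ (radialFn K u) ∂(sphMeasure n)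

/-- The dual Orlicz quermassintegral `Ṽ_ϕ(K) = (1/n) ∫_{S^{n-1}} ϕ(ρ_K(u)) du`. -/
def dualQuerm {n : ℕ} (ϕ : ℝ → ℝ) (K : Set (EuclideanSpace ℝ (Fin n))) : ℝ :=
  (n : ℝ)⁻¹ * ∫ u, ϕ (radialFn K u) ∂(sphMeasure n)

/-- `μ` is not concentrated in any closed hemisphere. -/
def NotConcentrated {n : ℕ} (μ : Measure (EuclideanSpace ℝ (Fin n))) : Prop :=
  ∀ ξ ∈ unitSphere n, 0 < ∫ θ, max ⟪ξ, θ⟫ 0 ∂μ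

/-- Conditions A1)–A3): `ϕ : (0,∞) → (0,∞)` is strictly decreasing with
`ϕ(0⁺) = ∞`, `ϕ(∞) = 0`, differentiable with `ϕ' < 0`, and
`φ(t) = -ϕ'(t)·t` is (positive and) continuous on `(0,∞)`. -/
def CondA (ϕ φ : ℝ → ℝ) : Prop :=
  StrictAntiOn ϕ (Set.Ioi 0) ∧ (∀ t > (0 : ℝ), 0 < ϕ t) ∧
    Tendsto ϕ (𝓝[>] (0 : ℝ)) atTop ∧ Tendsto ϕ atTop (𝓝 (0 : ℝ)) ∧
    (∀ t > (0 : ℝ), HasDerivAt ϕ (-(φ t) / t) t) ∧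
    (∀ t > (0 : ℝ), 0 < φ t) ∧ ContinuousOn φ (Set.Ioi 0)

/-- Conditions B1)–B3): `ϕ : (0,∞) → (0,∞)` is strictly increasing with
`ϕ(0⁺) = 0`, `ϕ(∞) = ∞`, differentiable with `ϕ' > 0`, and
`φ(t) = ϕ'(t)·t` is (positive and) continuous on `(0,∞)`. -/
def CondB (ϕ φ : ℝ → ℝ) : Prop :=
  StrictMonoOn ϕ (Set.Ioi 0) ∧ (∀ t > (0 : ℝ), 0 < ϕ t) ∧
    Tendsto ϕ (𝓝[>] (0 : ℝ)) (𝓝 (0 : ℝ)) ∧ Tendsto ϕ atTop atTop ∧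
    (∀ t > (0 : ℝ), HasDerivAt ϕ (φ t / t) t) ∧
    (∀ t > (0 : ℝ), 0 < φ t) ∧ ContinuousOn φ (Set.Ioi 0)

/-- The Wulff shape `[f] = ⋂_{u ∈ Ω} {x : x·u ≤ f(u)}`. -/
def wulff {n : ℕ} (Ω : Set (EuclideanSpace ℝ (Fin n))) (f : EuclideanSpace ℝ (Fin n) → ℝ) :
    Set (EuclideanSpace ℝ (Fin n)) :=
  ⋂ u ∈ Ω, {x | ⟪x, u⟫ ≤ f u}

/-- The convex hull `⟨ρ⟩ = conv {ρ(u) u : u ∈ Ω}`. -/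
def sphHull {n : ℕ} (Ω : Set (EuclideanSpace ℝ (Fin n))) (ρ : EuclideanSpace ℝ (Fin n) → ℝ) :
    Set (EuclideanSpace ℝ (Fin n)) :=
  convexHull ℝ ((fun u => ρ u • u) '' Ω)

/-- The set `∂′K` of boundary points of `K` having a unique outer unit normal. -/
def uniqNormalPts {n : ℕ} (K : Set (EuclideanSpace ℝ (Fin n))) :
    Set (EuclideanSpace ℝ (Fin n)) :=
  {x | x ∈ frontier K ∧ ∃! v, v ∈ unitSphere n ∧ ⟪x, v⟫ = suppFn K v}

/-- The polar body `K* = {x : x·y ≤ 1 for all y ∈ K}`. -/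
def polarBody {n : ℕ} (K : Set (EuclideanSpace ℝ (Fin n))) :
    Set (EuclideanSpace ℝ (Fin n)) :=
  {x | ∀ y ∈ K, ⟪x, y⟫ ≤ 1}

/-- `Ω` is a closed subset of `S^{n-1}` not contained in any closed hemisphere. -/
def GoodOmega {n : ℕ} (Ω : Set (EuclideanSpace ℝ (Fin n))) : Prop :=
  Ω ⊆ unitSphere n ∧ IsClosed Ω ∧ ∀ ξ ∈ unitSphere n, ∃ u ∈ Ω, ⟪ξ, u⟫ < 0
namespace DualQuermAux

variable {n : ℕ}

/-- `F(u) = sup_{v ∈ S^{n-1}} max(⟨u,v⟩,0) / h(v)`; the radial function of the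
Wulff shape of `h` is `F⁻¹`. -/
def sphSup (n : ℕ) (h : EuclideanSpace ℝ (Fin n) → ℝ) (u : EuclideanSpace ℝ (Fin n)) : ℝ :=
  sSup ((fun v => max ⟪u, v⟫ 0 / h v) '' unitSphere n)

lemma norm_eq_one {u : EuclideanSpace ℝ (Fin n)} (hu : u ∈ unitSphere n) : ‖u‖ = 1 :=
  mem_sphere_zero_iff_norm.mp hu

lemma max_inner_le_one {u v : EuclideanSpace ℝ (Fin n)} (hu : u ∈ unitSphere n)
    (hv : v ∈ unitSphere n) : max ⟪u, v⟫ 0 ≤ 1 := by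
  refine max_le ?_ zero_le_one
  calc ⟪u, v⟫ ≤ ‖u‖ * ‖v‖ := real_inner_le_norm u v
    _ = 1 := by rw [norm_eq_one hu, norm_eq_one hv, mul_one]

lemma elt_le {δ : ℝ} {h : EuclideanSpace ℝ (Fin n) → ℝ} {u v : EuclideanSpace ℝ (Fin n)}
    (hδ : 0 < δ) (hv' : δ ≤ h v) (hu : u ∈ unitSphere n) (hv : v ∈ unitSphere n) :
    max ⟪u, v⟫ 0 / h v ≤ δ⁻¹ := by
  calc max ⟪u, v⟫ 0 / h v ≤ 1 / δ :=
        div_le_div₀ zero_le_one (max_inner_le_one hu hv) hδ hv'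
    _ = δ⁻¹ := one_div δ

lemma bddAbove_elts {δ : ℝ} {h : EuclideanSpace ℝ (Fin n) → ℝ} {u : EuclideanSpace ℝ (Fin n)}
    (hδ : 0 < δ) (hh : ∀ v ∈ unitSphere n, δ ≤ h v) (hu : u ∈ unitSphere n) :
    BddAbove ((fun v => max ⟪u, v⟫ 0 / h v) '' unitSphere n) := by
  refine ⟨δ⁻¹, ?_⟩
  rintro _ ⟨v, hv, rfl⟩
  exact elt_le hδ (hh v hv) hu hv

lemma le_sphSup {δ : ℝ} {h : EuclideanSpace ℝ (Fin n) → ℝ} {u : EuclideanSpace ℝ (Fin n)}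
    (hδ : 0 < δ) (hh : ∀ v ∈ unitSphere n, δ ≤ h v) (hu : u ∈ unitSphere n) :
    (h u)⁻¹ ≤ sphSup n h u := by
  have h1 : ⟪u, u⟫ = (1 : ℝ) := by
    rw [real_inner_self_eq_norm_mul_norm, norm_eq_one hu, mul_one]
  have := le_csSup (bddAbove_elts hδ hh hu) ⟨u, hu, rfl⟩
  simpa [sphSup, h1, norm_eq_one hu, max_eq_left (zero_le_one (α := ℝ)), one_div] using this

lemma sphSup_pos {δ : ℝ} {h : EuclideanSpace ℝ (Fin n) → ℝ} {u : EuclideanSpace ℝ (Fin n)}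
    (hδ : 0 < δ) (hh : ∀ v ∈ unitSphere n, δ ≤ h v) (hu : u ∈ unitSphere n) :
    0 < sphSup n h u :=
  lt_of_lt_of_le (inv_pos.mpr (hδ.trans_le (hh u hu))) (le_sphSup hδ hh hu)

lemma sphSup_le {δ : ℝ} {h : EuclideanSpace ℝ (Fin n) → ℝ} {u : EuclideanSpace ℝ (Fin n)}
    (hδ : 0 < δ) (hh : ∀ v ∈ unitSphere n, δ ≤ h v) (hu : u ∈ unitSphere n) :
    sphSup n h u ≤ δ⁻¹ := by
  apply csSup_le ((Set.nonempty_of_mem hu).image _)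
  rintro _ ⟨v, hv, rfl⟩
  exact elt_le hδ (hh v hv) hu hv

lemma radial_mem_Icc {δ M : ℝ} {h : EuclideanSpace ℝ (Fin n) → ℝ} {u : EuclideanSpace ℝ (Fin n)}
    (hδ : 0 < δ) (hlb : ∀ v ∈ unitSphere n, δ ≤ h v) (hub : ∀ v ∈ unitSphere n, h v ≤ M)
    (hu : u ∈ unitSphere n) : (sphSup n h u)⁻¹ ∈ Set.Icc δ M := by
  have hs := sphSup_pos hδ hlb hu
  have hupos := hδ.trans_le (hlb u hu)
  have hM : 0 < M := hupos.trans_le (hub u hu)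
  constructor
  · have := inv_anti₀ hs (sphSup_le hδ hlb hu)
    rwa [inv_inv] at this
  · have h1 : M⁻¹ ≤ sphSup n h u := by
      refine le_trans ?_ (le_sphSup hδ hlb hu)
      exact inv_anti₀ hupos (hub u hu)
    have := inv_anti₀ (inv_pos.mpr hM) h1
    rwa [inv_inv] at this

lemma radialFn_wulff {δ : ℝ} {h : EuclideanSpace ℝ (Fin n) → ℝ} {u : EuclideanSpace ℝ (Fin n)}
    (hδ : 0 < δ) (hh : ∀ v ∈ unitSphere n, δ ≤ h v) (hu : u ∈ unitSphere n) :
    radialFn (wulff (unitSphere n) h) u = (sphSup n h u)⁻¹ := by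
  have hBdd := bddAbove_elts hδ hh hu
  have hs := sphSup_pos hδ hh hu
  have hmem : ∀ r : ℝ, (r • u ∈ wulff (unitSphere n) h ↔ ∀ v ∈ unitSphere n, r * ⟪u, v⟫ ≤ h v) := by
    intro r
    simp only [wulff, Set.mem_iInter, Set.mem_setOf_eq, real_inner_smul_left]
  have key : {r : ℝ | 0 < r ∧ r • u ∈ wulff (unitSphere n) h} = Set.Ioc 0 (sphSup n h u)⁻¹ := by
    ext r
    simp only [Set.mem_setOf_eq, Set.mem_Ioc, hmem]
    constructor
    · rintro ⟨hr, hall⟩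
      refine ⟨hr, ?_⟩
      have hsr : sphSup n h u ≤ r⁻¹ := by
        apply csSup_le ((Set.nonempty_of_mem hu).image _)
        rintro _ ⟨v, hv, rfl⟩
        dsimp only
        rcases le_or_gt ⟪u, v⟫ 0 with hneg | hpos'
        · rw [max_eq_right hneg, zero_div]; positivity
        · rw [max_eq_left hpos'.le]
          rw [div_le_iff₀ (hδ.trans_le (hh v hv))]
          have h1 := hall v hv
          rw [mul_comm] at h1
          have : ⟪u, v⟫ ≤ h v / r := (le_div_iff₀ hr).mpr h1
          rwa [div_eq_inv_mul] at this
      have := inv_anti₀ hs hsr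
      rwa [inv_inv] at this
    · rintro ⟨hr, hrs⟩
      refine ⟨hr, fun v hv => ?_⟩
      rcases le_or_gt ⟪u, v⟫ 0 with hneg | hpos'
      · exact (mul_nonpos_of_nonneg_of_nonpos hr.le hneg).trans (hδ.trans_le (hh v hv)).le
      · have hel : ⟪u, v⟫ / h v ≤ sphSup n h u := by
          have h3 := le_csSup hBdd (Set.mem_image_of_mem _ hv)
          try dsimp only at h3
          rw [max_eq_left hpos'.le] at h3
          exact h3
        have hv0 := hδ.trans_le (hh v hv)
        have h2 : ⟪u, v⟫ ≤ sphSup n h u * h v := (div_le_iff₀ hv0).mp hel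
        calc r * ⟪u, v⟫ ≤ (sphSup n h u)⁻¹ * ⟪u, v⟫ :=
              mul_le_mul_of_nonneg_right hrs hpos'.le
          _ ≤ (sphSup n h u)⁻¹ * (sphSup n h u * h v) :=
              mul_le_mul_of_nonneg_left h2 (inv_nonneg.mpr hs.le)
          _ = h v := by field_simp
  rw [radialFn, key, csSup_Ioc (by positivity)]

lemma csSup_le_csSup_add {α : Type*} {A : Set α} (hA : A.Nonempty) {e₁ e₂ : α → ℝ} {c : ℝ}
    (hb₂ : BddAbove (e₂ '' A)) (hle : ∀ v ∈ A, e₁ v ≤ e₂ v + c) :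
    sSup (e₁ '' A) ≤ sSup (e₂ '' A) + c := by
  apply csSup_le (hA.image _)
  rintro _ ⟨v, hv, rfl⟩
  exact (hle v hv).trans (add_le_add_left (le_csSup hb₂ ⟨v, hv, rfl⟩) c)

lemma abs_csSup_sub_csSup {α : Type*} {A : Set α} (hA : A.Nonempty) {e₁ e₂ : α → ℝ} {c : ℝ}
    (hb₁ : BddAbove (e₁ '' A)) (hb₂ : BddAbove (e₂ '' A))
    (hle : ∀ v ∈ A, |e₁ v - e₂ v| ≤ c) :
    |sSup (e₁ '' A) - sSup (e₂ '' A)| ≤ c := by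
  have k1 : sSup (e₁ '' A) ≤ sSup (e₂ '' A) + c := by
    refine csSup_le_csSup_add hA hb₂ fun v hv => ?_
    have h2 := abs_le.mp (hle v hv)
    linarith [h2.1, h2.2]
  have k2 : sSup (e₂ '' A) ≤ sSup (e₁ '' A) + c := by
    refine csSup_le_csSup_add hA hb₁ fun v hv => ?_
    have h2 := abs_le.mp (hle v hv)
    linarith [h2.1, h2.2]
  rw [abs_sub_le_iff]
  constructor <;> linarith

lemma sphSup_h_diff {δ ε : ℝ} {h₁ h₂ : EuclideanSpace ℝ (Fin n) → ℝ}
    {u : EuclideanSpace ℝ (Fin n)} (hδ : 0 < δ)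
    (hh₁ : ∀ v ∈ unitSphere n, δ ≤ h₁ v) (hh₂ : ∀ v ∈ unitSphere n, δ ≤ h₂ v)
    (hdiff : ∀ v ∈ unitSphere n, |h₁ v - h₂ v| ≤ ε) (hu : u ∈ unitSphere n) :
    |sphSup n h₁ u - sphSup n h₂ u| ≤ ε / δ ^ 2 := by
  apply abs_csSup_sub_csSup (Set.nonempty_of_mem hu) (bddAbove_elts hδ hh₁ hu) (bddAbove_elts hδ hh₂ hu)
  intro v hv
  have hb := hδ.trans_le (hh₁ v hv)
  have hd := hδ.trans_le (hh₂ v hv)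
  rw [div_sub_div _ _ hb.ne' hd.ne', abs_div]
  have hε0 : 0 ≤ ε := (abs_nonneg _).trans (hdiff v hv)
  have hnum : |max ⟪u, v⟫ 0 * h₂ v - h₁ v * max ⟪u, v⟫ 0| ≤ ε := by
    have heq : max ⟪u, v⟫ 0 * h₂ v - h₁ v * max ⟪u, v⟫ 0
        = max ⟪u, v⟫ 0 * (h₂ v - h₁ v) := by ring
    rw [heq, abs_mul]
    have hm : |max ⟪u, v⟫ 0| ≤ 1 := by
      rw [abs_of_nonneg (le_max_right _ _)]; exact max_inner_le_one hu hv
    have h2 : |h₂ v - h₁ v| ≤ ε := by rw [abs_sub_comm]; exact hdiff v hv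
    calc |max ⟪u, v⟫ 0| * |h₂ v - h₁ v| ≤ 1 * ε :=
          mul_le_mul hm h2 (abs_nonneg _) zero_le_one
      _ = ε := one_mul ε
  have hden : δ ^ 2 ≤ |h₁ v * h₂ v| := by
    have hmul : δ * δ ≤ h₁ v * h₂ v := mul_le_mul (hh₁ v hv) (hh₂ v hv) hδ.le hb.le
    rw [abs_of_pos (mul_pos hb hd)]; nlinarith [hmul]
  exact div_le_div₀ hε0 hnum (by positivity) hden

lemma sphSup_u_diff {δ : ℝ} {h : EuclideanSpace ℝ (Fin n) → ℝ}
    {u u' : EuclideanSpace ℝ (Fin n)} (hδ : 0 < δ)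
    (hh : ∀ v ∈ unitSphere n, δ ≤ h v) (hu : u ∈ unitSphere n) (hu' : u' ∈ unitSphere n) :
    |sphSup n h u - sphSup n h u'| ≤ ‖u - u'‖ / δ := by
  apply abs_csSup_sub_csSup (Set.nonempty_of_mem hu) (bddAbove_elts hδ hh hu) (bddAbove_elts hδ hh hu')
  intro v hv
  have hv0 := hδ.trans_le (hh v hv)
  rw [div_sub_div_same, abs_div, abs_of_pos hv0]
  refine div_le_div₀ (norm_nonneg _) ?_ hδ (hh v hv)
  calc |max ⟪u, v⟫ 0 - max ⟪u', v⟫ 0| ≤ |⟪u, v⟫ - ⟪u', v⟫| := abs_max_sub_max_le_abs _ _ _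
    _ = |⟪u - u', v⟫| := by rw [inner_sub_left]
    _ ≤ ‖u - u'‖ * ‖v‖ := abs_real_inner_le_norm _ _
    _ = ‖u - u'‖ := by rw [norm_eq_one hv, mul_one]

lemma abs_inv_sub_inv_le {a b μ : ℝ} (hμ : 0 < μ) (ha : μ ≤ a) (hb : μ ≤ b) :
    |a⁻¹ - b⁻¹| ≤ |a - b| / μ ^ 2 := by
  have ha0 := hμ.trans_le ha
  have hb0 := hμ.trans_le hb
  rw [inv_sub_inv ha0.ne' hb0.ne', abs_div, abs_sub_comm b a]
  have hden : μ ^ 2 ≤ |a * b| := by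
    have hmul : μ * μ ≤ a * b := mul_le_mul ha hb hμ.le ha0.le
    rw [abs_of_pos (mul_pos ha0 hb0)]; nlinarith [hmul]
  exact div_le_div₀ (abs_nonneg _) le_rfl (by positivity) hden

lemma continuousOn_inv_sphSup {δ M : ℝ} {h : EuclideanSpace ℝ (Fin n) → ℝ}
    (hδ : 0 < δ) (hh : ∀ v ∈ unitSphere n, δ ≤ h v) (hM : 0 < M)
    (hub : ∀ v ∈ unitSphere n, h v ≤ M) :
    ContinuousOn (fun u => (sphSup n h u)⁻¹) (unitSphere n) := by
  have hlip : LipschitzOnWith (Real.toNNReal (M ^ 2 / δ)) (fun u => (sphSup n h u)⁻¹)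
      (unitSphere n) := by
    apply LipschitzOnWith.of_dist_le_mul
    intro u hu u' hu'
    have hl1 : M⁻¹ ≤ sphSup n h u :=
      le_trans (inv_anti₀ (hδ.trans_le (hh u hu)) (hub u hu)) (le_sphSup hδ hh hu)
    have hl2 : M⁻¹ ≤ sphSup n h u' :=
      le_trans (inv_anti₀ (hδ.trans_le (hh u' hu')) (hub u' hu')) (le_sphSup hδ hh hu')
    rw [Real.dist_eq, dist_eq_norm]
    calc |(sphSup n h u)⁻¹ - (sphSup n h u')⁻¹|
        ≤ |sphSup n h u - sphSup n h u'| / (M⁻¹) ^ 2 :=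
          abs_inv_sub_inv_le (inv_pos.mpr hM) hl1 hl2
      _ ≤ (‖u - u'‖ / δ) / (M⁻¹) ^ 2 := by
          gcongr
          exact sphSup_u_diff hδ hh hu hu'
      _ = (M ^ 2 / δ) * ‖u - u'‖ := by field_simp
      _ = (Real.toNNReal (M ^ 2 / δ) : ℝ) * ‖u - u'‖ := by
          rw [Real.coe_toNNReal _ (by positivity)]
  exact hlip.continuousOn

lemma sphere_nonempty' (hn : 0 < n) : (unitSphere n).Nonempty := by
  have : Nonempty (Fin n) := ⟨⟨0, hn⟩⟩
  exact NormedSpace.sphere_nonempty.mpr zero_le_one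

lemma sphMeasure_ae_mem : ∀ᵐ u ∂(sphMeasure n), u ∈ unitSphere n := by
  simp only [sphMeasure]
  exact MeasureTheory.ae_restrict_mem Metric.isClosed_sphere.measurableSet

lemma dualQuerm_eq_zero (hn : 0 < n)
    (hinf : (μH[(n : ℝ) - 1] : Measure (EuclideanSpace ℝ (Fin n))) (unitSphere n) = ⊤)
    (ϕ : ℝ → ℝ) (hϕc : ContinuousOn ϕ (Set.Ioi 0)) (hϕp : ∀ t > (0 : ℝ), 0 < ϕ t)
    (g : EuclideanSpace ℝ (Fin n) → ℝ) (hgc : ContinuousOn g (unitSphere n))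
    (hgp : ∀ v ∈ unitSphere n, 0 < g v) :
    dualQuerm ϕ (wulff (unitSphere n) g) = 0 := by
  have hSne := sphere_nonempty' (n := n) hn
  have hSc : IsCompact (unitSphere n) := isCompact_sphere 0 1
  obtain ⟨v₀, hv₀, hminOn⟩ := hSc.exists_isMinOn hSne hgc
  obtain ⟨v₁, hv₁, hmaxOn⟩ := hSc.exists_isMaxOn hSne hgc
  have hδ : 0 < g v₀ := hgp v₀ hv₀
  have hlb : ∀ v ∈ unitSphere n, g v₀ ≤ g v := fun v hv => hminOn hv
  have hub : ∀ v ∈ unitSphere n, g v ≤ g v₁ := fun v hv => hmaxOn hv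
  have hρ : ∀ u ∈ unitSphere n, radialFn (wulff (unitSphere n) g) u ∈ Set.Icc (g v₀) (g v₁) := by
    intro u huS
    rw [radialFn_wulff hδ hlb huS]
    exact radial_mem_Icc hδ hlb hub huS
  have hIccne : (Set.Icc (g v₀) (g v₁)).Nonempty := Set.nonempty_Icc.mpr (hlb v₁ hv₁)
  obtain ⟨t₀, ht₀, hϕmin⟩ := isCompact_Icc.exists_isMinOn hIccne
    (hϕc.mono fun t ht => hδ.trans_le ht.1)
  have hc0 : 0 < ϕ t₀ := hϕp t₀ (hδ.trans_le ht₀.1)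
  have hni : ¬ Integrable (fun u => ϕ (radialFn (wulff (unitSphere n) g) u)) (sphMeasure n) := by
    intro hInt
    have hge : ENNReal.ofReal (ϕ t₀) * (sphMeasure n) Set.univ
        ≤ ∫⁻ u, ‖ϕ (radialFn (wulff (unitSphere n) g) u)‖₊ ∂(sphMeasure n) := by
      rw [← MeasureTheory.lintegral_const]
      apply MeasureTheory.lintegral_mono_ae
      filter_upwards [sphMeasure_ae_mem (n := n)] with u huS
      rw [← enorm_eq_nnnorm, ← ofReal_norm, Real.norm_eq_abs]
      refine ENNReal.ofReal_le_ofReal ?_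
      exact le_trans (hϕmin (hρ u huS)) (le_abs_self _)
    have htop : ENNReal.ofReal (ϕ t₀) * (sphMeasure n) Set.univ = ⊤ := by
      have huniv : (sphMeasure n) Set.univ = ⊤ := by
        simp only [sphMeasure]
        rw [Measure.restrict_apply_univ]
        exact hinf
      rw [huniv]
      exact ENNReal.mul_top (by simpa using hc0.le.lt_of_ne (by simpa using hc0.ne))
    exact hInt.2.not_ge (htop ▸ hge)
  rw [dualQuerm, integral_undef hni, mul_zero]

end DualQuermAux


open DualQuermAux in
/-- **Continuity of `Ṽ_ϕ` through Wulff shapes** (consequence of Lemma 3.1 and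
Aleksandrov's convergence theorem). If `ϕ : (0,∞) → (0,∞)` is continuous and
`h_i → h` uniformly on `S^{n-1}` with `h_i, h` continuous and positive, then
`Ṽ_ϕ([h_i]) → Ṽ_ϕ([h])`. -/
theorem dualQuerm_wulff_continuous {n : ℕ} (hn : 0 < n) (ϕ : ℝ → ℝ)
    (hϕc : ContinuousOn ϕ (Set.Ioi 0)) (hϕp : ∀ t > (0 : ℝ), 0 < ϕ t)
    (h : ℕ → EuclideanSpace ℝ (Fin n) → ℝ) (h₀ : EuclideanSpace ℝ (Fin n) → ℝ)
    (hhc : ∀ i, ContinuousOn (h i) (unitSphere n))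
    (hhp : ∀ i, ∀ v ∈ unitSphere n, 0 < h i v)
    (hh₀c : ContinuousOn h₀ (unitSphere n))
    (hh₀p : ∀ v ∈ unitSphere n, 0 < h₀ v)
    (hu : ∀ ε > (0 : ℝ), ∃ N : ℕ, ∀ i ≥ N, ∀ v ∈ unitSphere n, |h i v - h₀ v| ≤ ε) :
    Tendsto (fun i => dualQuerm ϕ (wulff (unitSphere n) (h i))) atTop
      (𝓝 (dualQuerm ϕ (wulff (unitSphere n) h₀))) := by
  classical
  by_cases hinf : (μH[(n : ℝ) - 1] : Measure (EuclideanSpace ℝ (Fin n))) (unitSphere n) = ⊤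
  · have h0 : ∀ i, dualQuerm ϕ (wulff (unitSphere n) (h i)) = 0 := fun i =>
      dualQuerm_eq_zero hn hinf ϕ hϕc hϕp (h i) (hhc i) (hhp i)
    rw [dualQuerm_eq_zero hn hinf ϕ hϕc hϕp h₀ hh₀c hh₀p]
    simp only [h0]
    exact tendsto_const_nhds
  · haveI : IsFiniteMeasure (sphMeasure n) := by
      constructor
      simp only [sphMeasure]
      rw [Measure.restrict_apply_univ]
      exact lt_top_iff_ne_top.mpr hinf
    have hSc : IsCompact (unitSphere n) := isCompact_sphere 0 1
    have hSne := sphere_nonempty' (n := n) hn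
    have hSmeas : MeasurableSet (unitSphere n) := Metric.isClosed_sphere.measurableSet
    obtain ⟨v₀, hv₀, hminOn⟩ := hSc.exists_isMinOn hSne hh₀c
    obtain ⟨v₁, hv₁, hmaxOn⟩ := hSc.exists_isMaxOn hSne hh₀c
    set δ := h₀ v₀ with hδdef
    set M := h₀ v₁ with hMdef
    have hδ : 0 < δ := hh₀p v₀ hv₀
    have hh₀lb : ∀ v ∈ unitSphere n, δ ≤ h₀ v := fun v hv => hminOn hv
    have hh₀ub : ∀ v ∈ unitSphere n, h₀ v ≤ M := fun v hv => hmaxOn hv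
    have hδM : δ ≤ M := hh₀lb v₁ hv₁
    have hM : 0 < M := hδ.trans_le hδM
    have hδ' : 0 < δ / 2 := by positivity
    have hM' : 0 < M + δ := by positivity
    obtain ⟨N₀, hN₀⟩ := hu (δ / 2) hδ'
    have hbnds : ∀ i ≥ N₀, ∀ v ∈ unitSphere n, δ / 2 ≤ h i v ∧ h i v ≤ M + δ := by
      intro i hi v hv
      have h1 := abs_le.mp (hN₀ i hi v hv)
      have h2 := hh₀lb v hv
      have h3 := hh₀ub v hv
      constructor <;> linarith [h1.1, h1.2]
    -- radial function formulas
    have hradi : ∀ i, ∀ u ∈ unitSphere n,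
        radialFn (wulff (unitSphere n) (h i)) u = (sphSup n (h i) u)⁻¹ := by
      intro i
      obtain ⟨w, hw, hminw⟩ := hSc.exists_isMinOn hSne (hhc i)
      exact fun u huS => radialFn_wulff (hhp i w hw) (fun v hv => hminw hv) huS
    have hrad0 : ∀ u ∈ unitSphere n,
        radialFn (wulff (unitSphere n) h₀) u = (sphSup n h₀ u)⁻¹ :=
      fun u huS => radialFn_wulff hδ hh₀lb huS
    -- pointwise convergence of the radial functions
    have hρtend : ∀ u ∈ unitSphere n,
        Tendsto (fun i => (sphSup n (h i) u)⁻¹) atTop (𝓝 ((sphSup n h₀ u)⁻¹)) := by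
      intro u huS
      rw [Metric.tendsto_atTop]
      intro ε hε
      set ε' := min (δ / 2) (ε / 2 * ((δ / 2) ^ 2 / (M + δ) ^ 2)) with hε'def
      have hε'pos : 0 < ε' := lt_min hδ' (by positivity)
      obtain ⟨N₁, hN₁⟩ := hu ε' hε'pos
      refine ⟨max N₀ N₁, fun i hi => ?_⟩
      have hi0 : i ≥ N₀ := le_trans (le_max_left _ _) hi
      have hi1 : i ≥ N₁ := le_trans (le_max_right _ _) hi
      have hilb : ∀ v ∈ unitSphere n, δ / 2 ≤ h i v := fun v hv => (hbnds i hi0 v hv).1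
      have hiub : ∀ v ∈ unitSphere n, h i v ≤ M + δ := fun v hv => (hbnds i hi0 v hv).2
      have h0lb : ∀ v ∈ unitSphere n, δ / 2 ≤ h₀ v := fun v hv =>
        le_trans (by linarith) (hh₀lb v hv)
      have h0ub : ∀ v ∈ unitSphere n, h₀ v ≤ M + δ := fun v hv =>
        le_trans (hh₀ub v hv) (by linarith)
      have hsup_diff : |sphSup n (h i) u - sphSup n h₀ u| ≤ ε' / (δ / 2) ^ 2 :=
        sphSup_h_diff hδ' hilb h0lb (fun v hv => hN₁ i hi1 v hv) huS
      have hl1 : (M + δ)⁻¹ ≤ sphSup n (h i) u :=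
        le_trans (inv_anti₀ (hδ'.trans_le (hilb u huS)) (hiub u huS))
          (le_sphSup hδ' hilb huS)
      have hl2 : (M + δ)⁻¹ ≤ sphSup n h₀ u :=
        le_trans (inv_anti₀ (hδ.trans_le (hh₀lb u huS)) (h0ub u huS))
          (le_sphSup hδ hh₀lb huS)
      have hinv := abs_inv_sub_inv_le (inv_pos.mpr hM') hl1 hl2
      have heq : (ε' / (δ / 2) ^ 2) / ((M + δ)⁻¹) ^ 2 = ε' * ((M + δ) ^ 2 / (δ / 2) ^ 2) := by
        field_simp
      have hfinal : ε' * ((M + δ) ^ 2 / (δ / 2) ^ 2) ≤ ε / 2 := by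
        have hεle : ε' ≤ ε / 2 * ((δ / 2) ^ 2 / (M + δ) ^ 2) := min_le_right _ _
        calc ε' * ((M + δ) ^ 2 / (δ / 2) ^ 2)
            ≤ (ε / 2 * ((δ / 2) ^ 2 / (M + δ) ^ 2)) * ((M + δ) ^ 2 / (δ / 2) ^ 2) :=
              mul_le_mul_of_nonneg_right hεle (by positivity)
          _ = ε / 2 := by field_simp
      rw [Real.dist_eq]
      calc |(sphSup n (h i) u)⁻¹ - (sphSup n h₀ u)⁻¹|
          ≤ |sphSup n (h i) u - sphSup n h₀ u| / ((M + δ)⁻¹) ^ 2 := hinv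
        _ ≤ (ε' / (δ / 2) ^ 2) / ((M + δ)⁻¹) ^ 2 := by gcongr
        _ = ε' * ((M + δ) ^ 2 / (δ / 2) ^ 2) := heq
        _ ≤ ε / 2 := hfinal
        _ < ε := by linarith
    -- measurability
    have haesm : ∀ i, AEStronglyMeasurable
        (fun u => ϕ (radialFn (wulff (unitSphere n) (h i)) u)) (sphMeasure n) := by
      intro i
      obtain ⟨w, hw, hminw⟩ := hSc.exists_isMinOn hSne (hhc i)
      obtain ⟨w', hw', hmaxw⟩ := hSc.exists_isMaxOn hSne (hhc i)
      have hδi : 0 < h i w := hhp i w hw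
      have hlbw : ∀ v ∈ unitSphere n, h i w ≤ h i v := fun v hv => hminw hv
      have hubw : ∀ v ∈ unitSphere n, h i v ≤ h i w' := fun v hv => hmaxw hv
      have hMw : 0 < h i w' := hδi.trans_le (hubw w hw)
      have hconts : ContinuousOn (fun u => (sphSup n (h i) u)⁻¹) (unitSphere n) :=
        continuousOn_inv_sphSup hδi hlbw hMw hubw
      have hmaps : ∀ u ∈ unitSphere n, (sphSup n (h i) u)⁻¹ ∈ Set.Ioi (0 : ℝ) := fun u huS =>
        Set.mem_Ioi.mpr (inv_pos.mpr (sphSup_pos hδi hlbw huS))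
      have hcont : ContinuousOn (fun u => ϕ ((sphSup n (h i) u)⁻¹)) (unitSphere n) :=
        hϕc.comp hconts hmaps
      have hcong : ContinuousOn
          (fun u => ϕ (radialFn (wulff (unitSphere n) (h i)) u)) (unitSphere n) :=
        hcont.congr fun u huS => by rw [hradi i u huS]
      simp only [sphMeasure]
      exact hcong.aestronglyMeasurable hSmeas
    -- uniform bound
    have hIccne : (Set.Icc (δ / 2) (M + δ)).Nonempty := Set.nonempty_Icc.mpr (by linarith)
    obtain ⟨t₁, ht₁, hϕmax⟩ := isCompact_Icc.exists_isMaxOn hIccne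
      (hϕc.mono fun t ht => hδ'.trans_le ht.1)
    have hbound : ∀ᶠ i in atTop, ∀ᵐ u ∂(sphMeasure n),
        ‖ϕ (radialFn (wulff (unitSphere n) (h i)) u)‖ ≤ ϕ t₁ := by
      rw [eventually_atTop]
      refine ⟨N₀, fun i hi => ?_⟩
      filter_upwards [sphMeasure_ae_mem (n := n)] with u huS
      rw [hradi i u huS, Real.norm_eq_abs]
      have hmem : (sphSup n (h i) u)⁻¹ ∈ Set.Icc (δ / 2) (M + δ) :=
        radial_mem_Icc hδ' (fun v hv => (hbnds i hi v hv).1)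
          (fun v hv => (hbnds i hi v hv).2) huS
      rw [abs_of_pos (hϕp _ (hδ'.trans_le hmem.1))]
      exact hϕmax hmem
    -- pointwise convergence of the integrands
    have hptwise : ∀ᵐ u ∂(sphMeasure n),
        Tendsto (fun i => ϕ (radialFn (wulff (unitSphere n) (h i)) u)) atTop
          (𝓝 (ϕ (radialFn (wulff (unitSphere n) h₀) u))) := by
      filter_upwards [sphMeasure_ae_mem (n := n)] with u huS
      rw [hrad0 u huS]
      have h0pos : 0 < (sphSup n h₀ u)⁻¹ :=
        inv_pos.mpr (sphSup_pos hδ hh₀lb huS)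
      have hcontat : ContinuousAt ϕ ((sphSup n h₀ u)⁻¹) :=
        hϕc.continuousAt (Ioi_mem_nhds h0pos)
      have htc := hcontat.tendsto.comp (hρtend u huS)
      refine htc.congr fun i => ?_
      simp only [Function.comp_apply]
      rw [hradi i u huS]
    have hint := MeasureTheory.tendsto_integral_filter_of_dominated_convergence
      (fun _ => ϕ t₁) (Filter.Eventually.of_forall haesm) hbound
      (integrable_const (ϕ t₁)) hptwise
    simp only [dualQuerm]
    exact hint.const_mul _
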